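/- Comparison of exponents in dimension 2: define β*(p,w) = (3w−13)/(6w−20) − (9w−40)/((6w−20)p) and β**(p,w) = (1/(2p))·((3p²−2p−20)w − 23p² + 82p − 40)/((10+3p)w − 23p + 10). Then for all real p, w with 10/3 < p < w and w > 6, one has β**(p,w) < β*(p,w) if and only if w > 23/3. -/

import Mathlib

noncomputable def βstar (p w : ℝ) : ℝ :=
  (3*w - 13)/(6*w - 20) - (9*w - 40)/((6*w - 20)*p)

noncomputable def βstarstar (p w : ℝ) : ℝ :=
  (1/(2*p)) * ((3*p^2 - 2*p - 20)*w - 23*p^2 + 82*p - 40) / ((10 + 3*p)*w - 23*p + 10)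

theorem stmt10 (p w : ℝ) (h1 : 10/3 < p) (h2 : p < w) (h3 : 6 < w) :
    βstarstar p w < βstar p w ↔ 23/3 < w := by
  have hp : (0:ℝ) < p := by linarith
  have hd1 : (0:ℝ) < 6*w - 20 := by linarith
  have hd2 : (0:ℝ) < (10 + 3*p)*w - 23*p + 10 := by
    nlinarith [mul_pos (show (0:ℝ) < 3*p - 10 by linarith) (show (0:ℝ) < p - 1 by linarith),
      mul_pos (show (0:ℝ) < 10 + 3*p by linarith) (show (0:ℝ) < w - p by linarith)]
  have hden : (0:ℝ) < (6*w - 20)*p*((10 + 3*p)*w - 23*p + 10) :=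
    mul_pos (mul_pos hd1 hp) hd2
  have key : βstar p w - βstarstar p w =
      ((3*p - 10)*(3*w - 23)*(w - p))/((6*w - 20)*p*((10 + 3*p)*w - 23*p + 10)) := by
    unfold βstar βstarstar
    rw [eq_div_iff hden.ne', div_sub_div _ _ hd1.ne' (mul_ne_zero hd1.ne' hp.ne'), one_div,
      inv_mul_eq_div, div_div, div_sub_div _ _ (by positivity) (by positivity), div_mul_eq_mul_div, div_eq_iff (by positivity)]
    ring
  constructor
  · intro h
    have h0 : 0 < ((3*p - 10)*(3*w - 23)*(w - p))/((6*w - 20)*p*((10 + 3*p)*w - 23*p + 10)) := by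
      rw [← key]; linarith
    have hnum : 0 < (3*p - 10)*(3*w - 23)*(w - p) := by
      have := (div_pos_iff).mp h0
      rcases this with ⟨ha, _⟩ | ⟨_, hb⟩
      · exact ha
      · linarith
    nlinarith [mul_pos (show (0:ℝ) < 3*p - 10 by linarith) (show (0:ℝ) < w - p by linarith)]
  · intro h
    have hnum : 0 < (3*p - 10)*(3*w - 23)*(w - p) :=
      mul_pos (mul_pos (by linarith) (by linarith)) (by linarith)
    have := div_pos hnum hden
    linarith [key]
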